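/- Let K be an algebraically closed field of characteristic zero, and V, W finite-dimensional K[x,y]-modules that are NOT weakly isomorphic, with associated Lie algebras L_V = K⟨P,Q⟩ ⋉ V and L_W = K⟨S,T⟩ ⋉ W. Suppose there is a Lie algebra isomorphism φ: L_V → L_W with φ(K⟨P,Q⟩) ⊆ W. Then there are direct sum decompositions of K[x,y]-modules V = V₀ ⊕ V₂ and W = W₀ ⊕ W₂ such that: K[x,y] acts trivially (i.e. P, Q, S, T act as zero) on V₂ and W₂; V₂ and W₂ are isomorphic K[x,y]-modules; dim V₀ = dim W₀ ≤ 6; and V₀, W₀ are not weakly isomorphic. -/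

import Mathlib

/-- The bracket of the semidirect product `L_V = K⟨P,Q⟩ ⋉ V` on `(K × K) × V`. -/
def lieBk {K V : Type*} [Field K] [AddCommGroup V] [Module K V]
    (P Q : V →ₗ[K] V) (a b : (K × K) × V) : (K × K) × V :=
  (0, (a.1.1 • P + a.1.2 • Q) b.2 - (b.1.1 • P + b.1.2 • Q) a.2)

/-- The abelian ideal `{0} ⊕ V` of `L_V`. -/
def vEmb (K V : Type*) [Field K] [AddCommGroup V] [Module K V] :
    Submodule K ((K × K) × V) :=
  (⊥ : Submodule K (K × K)).prod (⊤ : Submodule K V)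

/-- The subalgebra `K⟨P,Q⟩ = K² ⊕ {0}` of `L_V`. -/
def pqEmb (K V : Type*) [Field K] [AddCommGroup V] [Module K V] :
    Submodule K ((K × K) × V) :=
  (⊤ : Submodule K (K × K)).prod (⊥ : Submodule K V)

/-- Weak isomorphism of the `K[x,y]`-modules given by operator pairs `(P,Q)` and
`(S,T)`: some twist of `(S,T)` by an invertible 2×2 matrix is isomorphic to `(P,Q)`. -/
def WeakIso {K V W : Type*} [Field K] [AddCommGroup V] [Module K V]
    [AddCommGroup W] [Module K W] (P Q : V →ₗ[K] V) (S T : W →ₗ[K] W) : Prop :=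
  ∃ M : Matrix (Fin 2) (Fin 2) K, IsUnit M ∧ ∃ e : V ≃ₗ[K] W,
    ∀ v, e (P v) = (M 0 0 • S + M 0 1 • T) (e v) ∧
         e (Q v) = (M 1 0 • S + M 1 1 • T) (e v)

open Module Submodule

section Aux

variable {K A B V W : Type*} [Field K] [AddCommGroup A] [Module K A]
  [AddCommGroup B] [Module K B] [AddCommGroup V] [Module K V]
  [AddCommGroup W] [Module K W]

lemma lieBk_add_left (P Q : V →ₗ[K] V) (x x' y : (K × K) × V) :
    lieBk P Q (x + x') y = lieBk P Q x y + lieBk P Q x' y := by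
  simp only [lieBk, Prod.fst_add, Prod.snd_add, LinearMap.add_apply, LinearMap.smul_apply,
    map_add, Prod.mk_add_mk, add_zero]
  refine Prod.ext (by simp) ?_
  module

lemma lieBk_smul_left (P Q : V →ₗ[K] V) (c : K) (x y : (K × K) × V) :
    lieBk P Q (c • x) y = c • lieBk P Q x y := by
  simp only [lieBk, Prod.smul_fst, Prod.smul_snd, LinearMap.add_apply, LinearMap.smul_apply,
    map_smul, Prod.smul_mk, smul_zero]
  refine Prod.ext (by simp) ?_
  simp only [smul_eq_mul]
  module

/-- the pencil map (a,b) ↦ aP + bQ -/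
def pencil (P Q : V →ₗ[K] V) : (K × K) →ₗ[K] (V →ₗ[K] V) where
  toFun c := c.1 • P + c.2 • Q
  map_add' := by intro a b; simp [add_smul]; abel
  map_smul' := by intro c a; simp [smul_smul, smul_add]

/-- the center of L_V -/
def lieCenter (P Q : V →ₗ[K] V) : Submodule K ((K × K) × V) where
  carrier := {x | ∀ y, lieBk P Q x y = 0}
  add_mem' := by intro a b ha hb; intro y; rw [lieBk_add_left, ha y, hb y, add_zero]
  zero_mem' := by intro y; simp [lieBk]
  smul_mem' := by intro c a ha; intro y; rw [lieBk_smul_left, ha y, smul_zero]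

lemma mem_lieCenter_iff (P Q : V →ₗ[K] V) (x : (K × K) × V) :
    x ∈ lieCenter P Q ↔ ∀ y, lieBk P Q x y = 0 := Iff.rfl

lemma lieCenter_eq (P Q : V →ₗ[K] V) :
    lieCenter P Q = (LinearMap.ker (pencil P Q)).prod (LinearMap.ker P ⊓ LinearMap.ker Q) := by
  ext x
  simp only [mem_lieCenter_iff, Submodule.mem_prod, LinearMap.mem_ker, Submodule.mem_inf]
  constructor
  · intro h
    refine ⟨?_, ?_, ?_⟩
    · ext v
      have := congrArg Prod.snd (h ((0, 0), v))
      simpa [lieBk, pencil] using this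
    · have := congrArg Prod.snd (h ((1, 0), 0))
      simpa [lieBk, neg_eq_zero] using this
    · have := congrArg Prod.snd (h ((0, 1), 0))
      simpa [lieBk, neg_eq_zero] using this
  · rintro ⟨h1, h2, h3⟩ y
    have h1' : x.1.1 • P + x.1.2 • Q = 0 := h1
    refine Prod.ext rfl ?_
    simp [lieBk, h1', h2, h3]

/-- `p.prod q` is equivalent to `p × q`. -/
def subProdEquiv (p : Submodule K A) (q : Submodule K B) : ↥(p.prod q) ≃ₗ[K] ↥p × ↥q where
  toFun x := (⟨x.val.1, x.property.1⟩, ⟨x.val.2, x.property.2⟩)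
  invFun y := ⟨(y.1.val, y.2.val), ⟨y.1.property, y.2.property⟩⟩
  map_add' _ _ := rfl
  map_smul' _ _ := rfl
  left_inv _ := rfl
  right_inv _ := rfl

lemma finrank_subProd (p : Submodule K A) (q : Submodule K B)
    [FiniteDimensional K p] [FiniteDimensional K q] :
    finrank K (p.prod q) = finrank K p + finrank K q := by
  rw [(subProdEquiv p q).finrank_eq, Module.finrank_prod]

lemma exists_sub_finrank (C : Submodule K V) {k : ℕ} [FiniteDimensional K C]
    (hk : k ≤ finrank K C) : ∃ p : Submodule K V, p ≤ C ∧ finrank K p = k := by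
  obtain ⟨s, hcard, hli⟩ := exists_finset_linearIndependent_of_le_finrank hk (M := ↥C)
  set p₀ : Submodule K ↥C := Submodule.span K (s : Set ↥C) with hp₀
  have h0 : finrank K p₀ = k := by rw [finrank_span_finset_eq_card hli, hcard]
  refine ⟨p₀.map C.subtype, ?_, ?_⟩
  · intro x hx
    simp only [Submodule.mem_map] at hx
    obtain ⟨y, -, rfl⟩ := hx
    exact y.property
  · rw [← (Submodule.equivMapOfInjective C.subtype C.injective_subtype p₀).finrank_eq, h0]

lemma decomp [FiniteDimensional K V] (P Q : V →ₗ[K] V) (k : ℕ)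
    (hk : k + finrank K ↥((LinearMap.ker P ⊓ LinearMap.ker Q) ⊓
        (LinearMap.range P ⊔ LinearMap.range Q))
      ≤ finrank K ↥(LinearMap.ker P ⊓ LinearMap.ker Q)) :
    ∃ V₀ V₂ : Submodule K V, (∀ x ∈ V₀, P x ∈ V₀) ∧ (∀ x ∈ V₀, Q x ∈ V₀) ∧
      V₀ ⊓ V₂ = ⊥ ∧ V₀ ⊔ V₂ = ⊤ ∧ (∀ v ∈ V₂, P v = 0 ∧ Q v = 0) ∧
      finrank K V₂ = k ∧ finrank K V₀ + k = finrank K V := by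
  set N := LinearMap.ker P ⊓ LinearMap.ker Q with hN
  set U := LinearMap.range P ⊔ LinearMap.range Q with hU
  obtain ⟨C₁, hC₁⟩ := Submodule.exists_isCompl (N ⊓ U)
  set C := N ⊓ C₁ with hC
  have hCN : (N ⊓ U) ⊔ C = N := by
    apply le_antisymm (sup_le inf_le_left inf_le_left)
    intro x hx
    have : x ∈ (N ⊓ U) ⊔ C₁ := by rw [hC₁.sup_eq_top]; trivial
    obtain ⟨a, ha, c, hc, rfl⟩ := Submodule.mem_sup.1 this
    exact Submodule.add_mem_sup ha
      (Submodule.mem_inf.2 ⟨by simpa using N.sub_mem hx ha.1, hc⟩)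
  have hCdisj : (N ⊓ U) ⊓ C = ⊥ := by
    rw [eq_bot_iff, ← hC₁.inf_eq_bot]
    exact inf_le_inf le_rfl inf_le_right
  have h1 : finrank K ↥(N ⊓ U ⊔ C) + finrank K ↥(N ⊓ U ⊓ C)
      = finrank K ↥(N ⊓ U) + finrank K ↥C :=
    Submodule.finrank_sup_add_finrank_inf_eq _ _
  have h2 : finrank K ↥(N ⊓ U ⊔ C) = finrank K ↥N := by rw [hCN]
  have h3 : finrank K ↥(N ⊓ U ⊓ C) = finrank K (⊥ : Submodule K V) := by rw [hCdisj]
  rw [h2, h3, finrank_bot] at h1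
  have hkC : k ≤ finrank K C := by omega
  obtain ⟨V₂, hV₂C, hV₂k⟩ := exists_sub_finrank C hkC
  have hV₂N : V₂ ≤ N := hV₂C.trans inf_le_left
  have hV₂U : V₂ ⊓ U = ⊥ := by
    rw [eq_bot_iff, ← hCdisj]
    exact le_inf (le_inf (inf_le_of_left_le hV₂N) inf_le_right) (inf_le_of_left_le hV₂C)
  obtain ⟨C₂, hC₂⟩ := Submodule.exists_isCompl (U ⊔ V₂)
  set V₀ := U ⊔ C₂ with hV₀
  have hsup : V₀ ⊔ V₂ = ⊤ := by
    rw [hV₀, sup_right_comm, hC₂.sup_eq_top]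
  have hinf : V₀ ⊓ V₂ = ⊥ := by
    rw [eq_bot_iff]
    rintro x ⟨hx0, hx2⟩
    obtain ⟨u, hu, c, hc, rfl⟩ := Submodule.mem_sup.1 hx0
    have hcmem : c ∈ C₂ ⊓ (U ⊔ V₂) := by
      refine ⟨hc, ?_⟩
      have : c = (u + c) - u := by abel
      rw [this]
      exact Submodule.sub_mem _ (Submodule.mem_sup_right hx2) (Submodule.mem_sup_left hu)
    rw [inf_comm, hC₂.inf_eq_bot] at hcmem
    simp only [Submodule.mem_bot] at hcmem
    subst hcmem
    rw [add_zero] at hx2 ⊢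
    have : u ∈ V₂ ⊓ U := ⟨hx2, hu⟩
    rw [hV₂U] at this
    exact this
  have hUV₀ : U ≤ V₀ := le_sup_left
  refine ⟨V₀, V₂, ?_, ?_, hinf, hsup, ?_, hV₂k, ?_⟩
  · intro x _; exact hUV₀ (Submodule.mem_sup_left (LinearMap.mem_range_self P x))
  · intro x _; exact hUV₀ (Submodule.mem_sup_right (LinearMap.mem_range_self Q x))
  · intro v hv
    have := hV₂N hv
    exact ⟨(Submodule.mem_inf.1 this).1, (Submodule.mem_inf.1 this).2⟩
  · have : IsCompl V₀ V₂ := ⟨disjoint_iff.2 hinf, codisjoint_iff.2 hsup⟩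
    rw [← Submodule.finrank_add_eq_of_isCompl this, hV₂k]

lemma weakIso_glue (P Q : V →ₗ[K] V) (S T : W →ₗ[K] W)
    {V₀ V₂ : Submodule K V} {W₀ W₂ : Submodule K W}
    (hPV₀ : ∀ x ∈ V₀, P x ∈ V₀) (hQV₀ : ∀ x ∈ V₀, Q x ∈ V₀)
    (hSW₀ : ∀ x ∈ W₀, S x ∈ W₀) (hTW₀ : ∀ x ∈ W₀, T x ∈ W₀)
    (hcV : IsCompl V₀ V₂) (hcW : IsCompl W₀ W₂)
    (hV₂ : ∀ v ∈ V₂, P v = 0 ∧ Q v = 0) (hW₂ : ∀ w ∈ W₂, S w = 0 ∧ T w = 0)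
    (e₂ : ↥V₂ ≃ₗ[K] ↥W₂)
    (h : WeakIso (P.restrict hPV₀) (Q.restrict hQV₀) (S.restrict hSW₀) (T.restrict hTW₀)) :
    WeakIso P Q S T := by
  obtain ⟨M, hM, e₀, he₀⟩ := h
  set cV := Submodule.prodEquivOfIsCompl V₀ V₂ hcV with hcVdef
  set cW := Submodule.prodEquivOfIsCompl W₀ W₂ hcW with hcWdef
  set e : V ≃ₗ[K] W := cV.symm.trans ((e₀.prodCongr e₂).trans cW) with hedef
  have he : ∀ (x : V₀) (y : V₂), e ((x : V) + (y : V)) = ↑(e₀ x) + ↑(e₂ y) := by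
    intro x y
    have h1 : ((x : V) + (y : V)) = cV (x, y) := rfl
    rw [hedef, h1]
    simp only [LinearEquiv.trans_apply, LinearEquiv.symm_apply_apply, LinearEquiv.prodCongr_apply]
    rfl
  have hS0 : ∀ y : V₂, S ↑(e₂ y) = 0 := fun y => (hW₂ _ (e₂ y).property).1
  have hT0 : ∀ y : V₂, T ↑(e₂ y) = 0 := fun y => (hW₂ _ (e₂ y).property).2
  refine ⟨M, hM, e, fun v => ?_⟩
  have hv : v ∈ V₀ ⊔ V₂ := by rw [hcV.sup_eq_top]; trivial
  obtain ⟨x, hx, y, hy, rfl⟩ := Submodule.mem_sup.1 hv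
  have hPy : P y = 0 := (hV₂ y hy).1
  have hQy : Q y = 0 := (hV₂ y hy).2
  have hkey : ∀ (F : V →ₗ[K] V) (hF : ∀ z ∈ V₀, F z ∈ V₀), F y = 0 →
      e (F (x + y)) = ↑(e₀ ((F.restrict hF) ⟨x, hx⟩)) := by
    intro F hF hFy
    have : F (x + y) = ↑((F.restrict hF) ⟨x, hx⟩) + ((0 : V₂) : V) := by
      simp [map_add, hFy, LinearMap.restrict_apply]
    rw [this, he, map_zero]
    simp
  have heval : e (x + y) = ↑(e₀ ⟨x, hx⟩) + ↑(e₂ ⟨y, hy⟩) := by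
    have : x + y = ((⟨x, hx⟩ : V₀) : V) + ((⟨y, hy⟩ : V₂) : V) := rfl
    rw [this, he]
  constructor
  · rw [hkey P hPV₀ hPy, (he₀ ⟨x, hx⟩).1, heval]
    simp only [LinearMap.add_apply, LinearMap.smul_apply, Submodule.coe_add,
      Submodule.coe_smul, map_add, smul_add, LinearMap.restrict_apply, hS0, hT0,
      smul_zero, add_zero]
  · rw [hkey Q hQV₀ hQy, (he₀ ⟨x, hx⟩).2, heval]
    simp only [LinearMap.add_apply, LinearMap.smul_apply, Submodule.coe_add,
      Submodule.coe_smul, map_add, smul_add, LinearMap.restrict_apply, hS0, hT0,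
      smul_zero, add_zero]

lemma pair_single (S T : W →ₗ[K] W) (d : K) (h : S = d • T) :
    (LinearMap.ker S ⊓ LinearMap.ker T = LinearMap.ker T) ∧
    (LinearMap.range S ⊔ LinearMap.range T = LinearMap.range T) := by
  constructor
  · refine le_antisymm inf_le_right (le_inf ?_ le_rfl)
    intro w hw
    rw [LinearMap.mem_ker] at hw ⊢
    rw [h]
    simp [hw]
  · refine le_antisymm (sup_le ?_ le_rfl) le_sup_right
    rintro _ ⟨w, rfl⟩
    rw [h]
    exact ⟨d • w, by simp⟩

end Aux

/-- Lemma 5: if V and W are not weakly isomorphic but there is a Lie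
algebra isomorphism φ : L_V → L_W with φ(K⟨P,Q⟩) ⊆ W, then V = V₀ ⊕ V₂ and
W = W₀ ⊕ W₂, with V₂, W₂ isomorphic trivial modules, dim V₀ = dim W₀ ≤ 6, and
V₀, W₀ not weakly isomorphic. -/
theorem stmt_15 {K V W : Type*} [Field K] [IsAlgClosed K] [CharZero K]
    [AddCommGroup V] [Module K V] [AddCommGroup W] [Module K W]
    [FiniteDimensional K V] [FiniteDimensional K W]
    (P Q : V →ₗ[K] V) (S T : W →ₗ[K] W)
    (hPQ : ∀ v, P (Q v) = Q (P v)) (hST : ∀ w, S (T w) = T (S w))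
    (hnw : ¬ WeakIso P Q S T)
    (φ : ((K × K) × V) ≃ₗ[K] ((K × K) × W))
    (hφ : ∀ a b, φ (lieBk P Q a b) = lieBk S T (φ a) (φ b))
    (hPQW : (pqEmb K V).map (φ : ((K × K) × V) →ₗ[K] (K × K) × W) ≤ vEmb K W) :
    ∃ (V₀ V₂ : Submodule K V) (W₀ W₂ : Submodule K W)
      (hPV₀ : ∀ x ∈ V₀, P x ∈ V₀) (hQV₀ : ∀ x ∈ V₀, Q x ∈ V₀)
      (hSW₀ : ∀ x ∈ W₀, S x ∈ W₀) (hTW₀ : ∀ x ∈ W₀, T x ∈ W₀),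
      V₀ ⊓ V₂ = ⊥ ∧ V₀ ⊔ V₂ = ⊤ ∧ W₀ ⊓ W₂ = ⊥ ∧ W₀ ⊔ W₂ = ⊤ ∧
      (∀ v ∈ V₂, P v = 0 ∧ Q v = 0) ∧ (∀ w ∈ W₂, S w = 0 ∧ T w = 0) ∧
      Nonempty (↥V₂ ≃ₗ[K] ↥W₂) ∧
      Module.finrank K ↥V₀ = Module.finrank K ↥W₀ ∧ Module.finrank K ↥V₀ ≤ 6 ∧
      ¬ WeakIso (P.restrict hPV₀) (Q.restrict hQV₀)
          (S.restrict hSW₀) (T.restrict hTW₀) := by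
  classical
  set n := finrank K V with hn
  -- dimensions agree
  have hWV : finrank K W = n := by
    have := φ.finrank_eq
    simp only [Module.finrank_prod, Module.finrank_self] at this
    omega
  -- φ sends the generators of K⟨P,Q⟩ into {0}⊕W
  have hgen : ∀ c : K × K, (φ (c, (0 : V))).1 = 0 := by
    intro c
    have hmem : ((c, (0 : V)) : (K × K) × V) ∈ pqEmb K V := by
      simp [pqEmb, Submodule.mem_prod]
    have h2 := hPQW (Submodule.mem_map_of_mem (f := (φ : ((K × K) × V) →ₗ[K] (K × K) × W)) hmem)
    simpa [vEmb, Submodule.mem_prod] using h2.1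
  set w₁ : W := (φ ((1, 0), (0 : V))).2 with hw₁def
  set w₂ : W := (φ ((0, 1), (0 : V))).2 with hw₂def
  have hw1 : φ ((1, 0), (0 : V)) = (0, w₁) := Prod.ext (hgen (1, 0)) rfl
  have hw2 : φ ((0, 1), (0 : V)) = (0, w₂) := Prod.ext (hgen (0, 1)) rfl
  -- the coefficient functional A v = (φ (0,v)).1
  set Amap : V →ₗ[K] K × K :=
    (LinearMap.fst K (K × K) W).comp ((φ : ((K × K) × V) →ₗ[K] (K × K) × W).comp
      (LinearMap.inr K (K × K) V)) with hAdef
  have hA : ∀ v : V, Amap v = (φ ((0 : K × K), v)).1 := fun v => rfl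
  set p₁ : V := (φ.symm ((0 : K × K), -(S w₁))).2 with hp₁def
  set p₂ : V := (φ.symm ((0 : K × K), -(T w₁))).2 with hp₂def
  set q₁ : V := (φ.symm ((0 : K × K), -(S w₂))).2 with hq₁def
  set q₂ : V := (φ.symm ((0 : K × K), -(T w₂))).2 with hq₂def
  -- key structural identity for P
  have hPkey : ∀ v : V, P v = (Amap v).1 • p₁ + (Amap v).2 • p₂ := by
    intro v
    have hb1 : lieBk P Q ((1, 0), (0 : V)) ((0 : K × K), v) = ((0 : K × K), P v) := by
      simp [lieBk]
    have h2 := hφ ((1, 0), (0 : V)) ((0 : K × K), v)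
    rw [hb1, hw1] at h2
    have h3 : lieBk S T ((0 : K × K), w₁) (φ ((0 : K × K), v))
        = ((0 : K × K), -((Amap v).1 • S w₁ + (Amap v).2 • T w₁)) := by
      simp [lieBk, hA]
    rw [h3] at h2
    have h4 : ((0 : K × K), P v)
        = (Amap v).1 • φ.symm ((0 : K × K), -(S w₁)) + (Amap v).2 • φ.symm ((0 : K × K), -(T w₁)) := by
      rw [← map_smul, ← map_smul, ← map_add]
      apply φ.injective
      rw [φ.apply_symm_apply, h2]
      refine Prod.ext (by simp) ?_
      simp only [Prod.snd_add, Prod.smul_snd]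
      module
    have := congrArg Prod.snd h4
    simpa using this
  have hQkey : ∀ v : V, Q v = (Amap v).1 • q₁ + (Amap v).2 • q₂ := by
    intro v
    have hb1 : lieBk P Q ((0, 1), (0 : V)) ((0 : K × K), v) = ((0 : K × K), Q v) := by
      simp [lieBk]
    have h2 := hφ ((0, 1), (0 : V)) ((0 : K × K), v)
    rw [hb1, hw2] at h2
    have h3 : lieBk S T ((0 : K × K), w₂) (φ ((0 : K × K), v))
        = ((0 : K × K), -((Amap v).1 • S w₂ + (Amap v).2 • T w₂)) := by
      simp [lieBk, hA]
    rw [h3] at h2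
    have h4 : ((0 : K × K), Q v)
        = (Amap v).1 • φ.symm ((0 : K × K), -(S w₂)) + (Amap v).2 • φ.symm ((0 : K × K), -(T w₂)) := by
      rw [← map_smul, ← map_smul, ← map_add]
      apply φ.injective
      rw [φ.apply_symm_apply, h2]
      refine Prod.ext (by simp) ?_
      simp only [Prod.snd_add, Prod.smul_snd]
      module
    have := congrArg Prod.snd h4
    simpa using this
  -- notation for kernels, images
  set NV := LinearMap.ker P ⊓ LinearMap.ker Q with hNVdef
  set UV := LinearMap.range P ⊔ LinearMap.range Q with hUVdef
  set NW := LinearMap.ker S ⊓ LinearMap.ker T with hNWdef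
  set UW := LinearMap.range S ⊔ LinearMap.range T with hUWdef
  -- codimension of N_V is at most 2
  have hkerA : LinearMap.ker Amap ≤ NV := by
    intro v hv
    rw [LinearMap.mem_ker] at hv
    have h1 : P v = 0 := by rw [hPkey v, hv]; simp
    have h2 : Q v = 0 := by rw [hQkey v, hv]; simp
    exact Submodule.mem_inf.2 ⟨LinearMap.mem_ker.2 h1, LinearMap.mem_ker.2 h2⟩
  have hcodimNV : n ≤ finrank K NV + 2 := by
    have h1 := LinearMap.finrank_range_add_finrank_ker Amap
    have h2 : finrank K (LinearMap.range Amap) ≤ 2 := by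
      have := Submodule.finrank_le (LinearMap.range Amap)
      simpa [Module.finrank_prod] using this
    have h3 : finrank K (LinearMap.ker Amap) ≤ finrank K NV := Submodule.finrank_mono hkerA
    omega
  -- rank of U_V is at most 4
  have hrangeP : LinearMap.range P ≤ LinearMap.range
      ((LinearMap.toSpanSingleton K V p₁).coprod (LinearMap.toSpanSingleton K V p₂)) := by
    rintro _ ⟨v, rfl⟩
    exact ⟨Amap v, by simp [LinearMap.coprod_apply, LinearMap.toSpanSingleton_apply, hPkey v]⟩
  have hrangeQ : LinearMap.range Q ≤ LinearMap.range
      ((LinearMap.toSpanSingleton K V q₁).coprod (LinearMap.toSpanSingleton K V q₂)) := by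
    rintro _ ⟨v, rfl⟩
    exact ⟨Amap v, by simp [LinearMap.coprod_apply, LinearMap.toSpanSingleton_apply, hQkey v]⟩
  have hrankP : finrank K (LinearMap.range P) ≤ 2 := by
    refine le_trans (Submodule.finrank_mono hrangeP) ?_
    refine le_trans (LinearMap.finrank_range_le _) ?_
    simp [Module.finrank_prod]
  have hrankQ : finrank K (LinearMap.range Q) ≤ 2 := by
    refine le_trans (Submodule.finrank_mono hrangeQ) ?_
    refine le_trans (LinearMap.finrank_range_le _) ?_
    simp [Module.finrank_prod]
  have hUV4 : finrank K UV ≤ 4 := by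
    have := Submodule.finrank_add_le_finrank_add_finrank (LinearMap.range P) (LinearMap.range Q)
    rw [← hUVdef] at this
    omega
  -- U_W is contained in the image of U_V under the map v ↦ (φ (0,v)).2
  set Fmap : V →ₗ[K] W :=
    (LinearMap.snd K (K × K) W).comp ((φ : ((K × K) × V) →ₗ[K] (K × K) × W).comp
      (LinearMap.inr K (K × K) V)) with hFdef
  have hF : ∀ v : V, Fmap v = (φ ((0 : K × K), v)).2 := fun v => rfl
  have hUWle : UW ≤ UV.map Fmap := by
    have key : ∀ (c : K × K) (R : W →ₗ[K] W),
        (∀ w : W, (c.1 • S + c.2 • T) w = R w) →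
        LinearMap.range R ≤ UV.map Fmap := by
      intro c R hc
      rintro _ ⟨w, rfl⟩
      set x₀ := φ.symm (c, (0 : W)) with hx₀
      set xw := φ.symm ((0 : K × K), w) with hxw
      have h2 := hφ x₀ xw
      rw [φ.apply_symm_apply, φ.apply_symm_apply] at h2
      have h3 : lieBk S T (c, (0 : W)) ((0 : K × K), w) = ((0 : K × K), R w) := by
        rw [← hc w]
        simp [lieBk]
      rw [h3] at h2
      set u := (x₀.1.1 • P + x₀.1.2 • Q) xw.2 - (xw.1.1 • P + xw.1.2 • Q) x₀.2 with hu
      have hulie : lieBk P Q x₀ xw = ((0 : K × K), u) := rfl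
      have humem : u ∈ UV := by
        rw [hu]
        refine Submodule.sub_mem _ ?_ ?_
        · exact Submodule.add_mem _
            (Submodule.mem_sup_left (Submodule.smul_mem _ _ (LinearMap.mem_range_self P _)))
            (Submodule.mem_sup_right (Submodule.smul_mem _ _ (LinearMap.mem_range_self Q _)))
        · exact Submodule.add_mem _
            (Submodule.mem_sup_left (Submodule.smul_mem _ _ (LinearMap.mem_range_self P _)))
            (Submodule.mem_sup_right (Submodule.smul_mem _ _ (LinearMap.mem_range_self Q _)))
      refine ⟨u, humem, ?_⟩
      rw [hF]
      rw [hulie] at h2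
      rw [h2]
    refine sup_le ?_ ?_
    · exact key (1, 0) S (by simp)
    · exact key (0, 1) T (by simp)
  have hUW4 : finrank K UW ≤ 4 := by
    refine le_trans (Submodule.finrank_mono hUWle) ?_
    refine le_trans (Submodule.finrank_map_le Fmap UV) hUV4
  -- the center argument
  have hZmap : (lieCenter P Q).map (φ : ((K × K) × V) →ₗ[K] (K × K) × W) = lieCenter S T := by
    ext y
    simp only [Submodule.mem_map, mem_lieCenter_iff]
    constructor
    · rintro ⟨x, hx, rfl⟩ y'
      have h2 := hφ x (φ.symm y')
      rw [hx (φ.symm y'), φ.apply_symm_apply, map_zero] at h2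
      exact h2.symm
    · intro hy
      refine ⟨φ.symm y, fun y' => ?_, φ.apply_symm_apply y⟩
      apply φ.injective
      rw [hφ, φ.apply_symm_apply, map_zero]
      exact hy (φ y')
  have hZrank : finrank K (lieCenter P Q) = finrank K (lieCenter S T) := by
    rw [← hZmap]
    exact (LinearEquiv.finrank_map_eq φ (lieCenter P Q)).symm
  have hZV : finrank K (lieCenter P Q)
      = finrank K (LinearMap.ker (pencil P Q)) + finrank K NV := by
    rw [lieCenter_eq, finrank_subProd]
  have hZW : finrank K (lieCenter S T)
      = finrank K (LinearMap.ker (pencil S T)) + finrank K NW := by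
    rw [lieCenter_eq, finrank_subProd]
  have hZeq : finrank K (LinearMap.ker (pencil P Q)) + finrank K NV
      = finrank K (LinearMap.ker (pencil S T)) + finrank K NW := by
    rw [← hZV, ← hZW, hZrank]
  -- the main W-side dimension bound
  have hWbound : n + finrank K ↥(NW ⊓ UW) ≤ finrank K NW + 6 := by
    by_cases hST0 : S = 0 ∧ T = 0
    · have hNWtop : NW = ⊤ := by
        rw [hNWdef, hST0.1, hST0.2, LinearMap.ker_zero, inf_idem]
      have h5 : finrank K NW = n := by rw [hNWtop, finrank_top, hWV]
      have h6 : finrank K ↥(NW ⊓ UW) ≤ 4 := le_trans (Submodule.finrank_mono inf_le_right) hUW4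
      omega
    · have hδW1 : finrank K (LinearMap.ker (pencil S T)) ≤ 1 := by
        have hne : LinearMap.ker (pencil S T) ≠ ⊤ := by
          intro htop
          refine hST0 ⟨?_, ?_⟩
          · have : ((1 : K), (0 : K)) ∈ LinearMap.ker (pencil S T) := htop ▸ Submodule.mem_top
            have h7 : (1 : K) • S + (0 : K) • T = 0 := this
            simpa using h7
          · have : ((0 : K), (1 : K)) ∈ LinearMap.ker (pencil S T) := htop ▸ Submodule.mem_top
            have h7 : (0 : K) • S + (1 : K) • T = 0 := this
            simpa using h7
        have := Submodule.finrank_lt (K := K) (V := K × K) hne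
        simp only [Module.finrank_prod, Module.finrank_self] at this
        omega
      by_cases hrel : ∃ c : K × K, c ≠ 0 ∧ c.1 • S + c.2 • T = 0
      · -- S and T are dependent: one operator situation
        obtain ⟨c, hc0, hcrel⟩ := hrel
        have hδW : 1 ≤ finrank K (LinearMap.ker (pencil S T)) := by
          have hcmem : c ∈ LinearMap.ker (pencil S T) := hcrel
          have hsp : Submodule.span K {c} ≤ LinearMap.ker (pencil S T) := by
            rw [Submodule.span_le, Set.singleton_subset_iff]; exact hcmem
          have := Submodule.finrank_mono hsp
          rw [finrank_span_singleton hc0] at this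
          exact this
        have hsingle : ∃ R : W →ₗ[K] W, NW = LinearMap.ker R ∧ UW = LinearMap.range R := by
          by_cases hc1 : c.1 = 0
          · have hc2 : c.2 ≠ 0 := fun h => hc0 (Prod.ext hc1 h)
            have hT0 : T = 0 := by
              have : c.2 • T = 0 := by
                have := hcrel; rw [hc1] at this; simpa using this
              have h8 := congrArg (fun (X : W →ₗ[K] W) => c.2⁻¹ • X) this
              simpa [smul_smul, inv_mul_cancel₀ hc2] using h8
            obtain ⟨h9, h10⟩ := pair_single T S 0 (by rw [hT0]; simp)
            exact ⟨S, by rw [hNWdef, inf_comm, h9], by rw [hUWdef, sup_comm, h10]⟩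
          · have hSd : S = (-(c.1⁻¹ * c.2)) • T := by
              have h8 := congrArg (fun (X : W →ₗ[K] W) => c.1⁻¹ • X) hcrel
              simp only [smul_add, smul_smul, smul_zero] at h8
              rw [inv_mul_cancel₀ hc1, one_smul] at h8
              have h9 : S = -((c.1⁻¹ * c.2) • T) := eq_neg_of_add_eq_zero_left h8
              rw [h9, neg_smul]
            obtain ⟨h9, h10⟩ := pair_single S T _ hSd
            exact ⟨T, by rw [hNWdef, h9], by rw [hUWdef, h10]⟩
        obtain ⟨R, hNR, hUR⟩ := hsingle
        have hrn : finrank K (LinearMap.range R) + finrank K (LinearMap.ker R) = n := by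
          rw [LinearMap.finrank_range_add_finrank_ker, hWV]
        have hu : finrank K ↥(NW ⊓ UW) ≤ finrank K (LinearMap.range R) := by
          rw [hUR]
          exact Submodule.finrank_mono inf_le_right
        have hν : finrank K NW = finrank K (LinearMap.ker R) := by rw [hNR]
        omega
      · -- S and T independent: δ_W = 0
        have hδW0 : finrank K (LinearMap.ker (pencil S T)) = 0 := by
          have : LinearMap.ker (pencil S T) = ⊥ := by
            rw [eq_bot_iff]
            intro c hc
            by_contra hc0
            exact hrel ⟨c, fun h => hc0 (by rw [h]; exact Submodule.zero_mem _), hc⟩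
          rw [this, finrank_bot]
        have h6 : finrank K ↥(NW ⊓ UW) ≤ 4 := le_trans (Submodule.finrank_mono inf_le_right) hUW4
        omega
  -- the V-side dimension bound
  have hVbound : n + finrank K ↥(NV ⊓ UV) ≤ finrank K NV + 6 := by
    have h6 : finrank K ↥(NV ⊓ UV) ≤ 4 := le_trans (Submodule.finrank_mono inf_le_right) hUV4
    omega
  -- choose the common corank
  have huVle : finrank K ↥(NV ⊓ UV) ≤ finrank K NV := Submodule.finrank_mono inf_le_left
  have huWle : finrank K ↥(NW ⊓ UW) ≤ finrank K NW := Submodule.finrank_mono inf_le_left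
  set k := min (finrank K NV - finrank K ↥(NV ⊓ UV)) (finrank K NW - finrank K ↥(NW ⊓ UW))
    with hkdef
  obtain ⟨V₀, V₂, hPV₀, hQV₀, hinfV, hsupV, htrivV, hV₂k, hV₀k⟩ :=
    decomp P Q k (by rw [← hNVdef, ← hUVdef]; omega)
  obtain ⟨W₀, W₂, hSW₀, hTW₀, hinfW, hsupW, htrivW, hW₂k, hW₀k⟩ :=
    decomp S T k (by rw [← hNWdef, ← hUWdef]; omega)
  have hrankeq : finrank K V₀ = finrank K W₀ := by omega
  have hrank6 : finrank K V₀ ≤ 6 := by omega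
  have he₂ : Nonempty (↥V₂ ≃ₗ[K] ↥W₂) :=
    FiniteDimensional.nonempty_linearEquiv_of_finrank_eq (hV₂k.trans hW₂k.symm)
  refine ⟨V₀, V₂, W₀, W₂, hPV₀, hQV₀, hSW₀, hTW₀, hinfV, hsupV, hinfW, hsupW,
    htrivV, htrivW, he₂, hrankeq, hrank6, ?_⟩
  intro hwk
  exact hnw (weakIso_glue P Q S T hPV₀ hQV₀ hSW₀ hTW₀
    ⟨disjoint_iff.2 hinfV, codisjoint_iff.2 hsupV⟩
    ⟨disjoint_iff.2 hinfW, codisjoint_iff.2 hsupW⟩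
    htrivV htrivW (Classical.choice he₂) hwk)
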